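/- Compression does not decrease variance irregularity: let G be a finite simple graph on n ≥ 1 vertices, let u and v be distinct vertices of G, and let G' = G_{u→v} be the compression of G from u to v. Then σ(G') ≥ σ(G), where σ denotes the variance irregularity. -/

import Mathlib

/-- The compression `G_{u→v}` of the simple graph `G` from vertex `u` to vertex `v`:
for each vertex `x` adjacent to `u` but neither adjacent nor equal to `v`, the edge
`{x, u}` is deleted and the edge `{x, v}` is added. -/
def SimpleGraph.compress {V : Type*} [DecidableEq V] (G : SimpleGraph V) (u v : V) :
    SimpleGraph V where
  Adj x y :=
    (G.Adj x y ∧ ¬(x = u ∧ G.Adj u y ∧ ¬G.Adj v y ∧ y ≠ v) ∧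
      ¬(y = u ∧ G.Adj u x ∧ ¬G.Adj v x ∧ x ≠ v)) ∨
    (x = v ∧ G.Adj u y ∧ ¬G.Adj v y ∧ y ≠ v) ∨
    (y = v ∧ G.Adj u x ∧ ¬G.Adj v x ∧ x ≠ v)
  symm := ⟨fun x y h => by
    rcases h with ⟨h1, h2, h3⟩ | h | h
    · exact Or.inl ⟨h1.symm, h3, h2⟩
    · exact Or.inr (Or.inr h)
    · exact Or.inr (Or.inl h)⟩
  loopless := ⟨fun x => by
    rintro (⟨h, -, -⟩ | ⟨rfl, -, -, h⟩ | ⟨rfl, -, -, h⟩)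
    · exact G.loopless.irrefl x h
    · exact h rfl
    · exact h rfl⟩

instance {V : Type*} [DecidableEq V] (G : SimpleGraph V) [DecidableRel G.Adj] (u v : V) :
    DecidableRel (G.compress u v).Adj := fun x y => by
  dsimp only [SimpleGraph.compress]; infer_instance

/-- The variance irregularity of a finite simple graph `G` on `n` vertices with degrees
`d_1, …, d_n`: `σ(G) = (1/n) Σ d_i² − (1/n²) (Σ d_i)²`. -/
noncomputable def SimpleGraph.varianceIrregularity {V : Type*} [Fintype V] [DecidableEq V]
    (G : SimpleGraph V) [DecidableRel G.Adj] : ℝ :=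
  (1 / (Fintype.card V : ℝ)) * ∑ w, (G.degree w : ℝ) ^ 2 -
    (1 / (Fintype.card V : ℝ) ^ 2) * (∑ w, (G.degree w : ℝ)) ^ 2

open Finset

section CompressAux
set_option linter.unusedSectionVars false

variable {V : Type*} [Fintype V] [DecidableEq V] (G : SimpleGraph V) [DecidableRel G.Adj] (u v : V)

/-- The set of vertices whose edge is moved from `u` to `v`. -/
def moveSet : Finset V := univ.filter (fun x => G.Adj u x ∧ ¬G.Adj v x ∧ x ≠ v)

lemma mem_moveSet {x : V} : x ∈ moveSet G u v ↔ G.Adj u x ∧ ¬G.Adj v x ∧ x ≠ v := by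
  simp [moveSet]

lemma compress_adj {x y : V} : (G.compress u v).Adj x y ↔
    (G.Adj x y ∧ ¬(x = u ∧ G.Adj u y ∧ ¬G.Adj v y ∧ y ≠ v) ∧
      ¬(y = u ∧ G.Adj u x ∧ ¬G.Adj v x ∧ x ≠ v)) ∨
    (x = v ∧ G.Adj u y ∧ ¬G.Adj v y ∧ y ≠ v) ∨
    (y = v ∧ G.Adj u x ∧ ¬G.Adj v x ∧ x ≠ v) := Iff.rfl

lemma moveSet_subset : moveSet G u v ⊆ G.neighborFinset u := by
  intro x hx
  rw [SimpleGraph.mem_neighborFinset]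
  exact ((mem_moveSet G u v).1 hx).1

lemma nbr_compress_u (huv : u ≠ v) :
    (G.compress u v).neighborFinset u = G.neighborFinset u \ moveSet G u v := by
  ext y
  rw [mem_sdiff, SimpleGraph.mem_neighborFinset, SimpleGraph.mem_neighborFinset,
    mem_moveSet, compress_adj]
  have h1 : ¬ G.Adj u u := G.loopless.irrefl u
  have h2 : ¬ (u = v) := huv
  tauto

lemma nbr_compress_v (huv : u ≠ v) :
    (G.compress u v).neighborFinset v = G.neighborFinset v ∪ moveSet G u v := by
  ext y
  rw [mem_union, SimpleGraph.mem_neighborFinset, SimpleGraph.mem_neighborFinset,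
    mem_moveSet, compress_adj]
  have h1 : ¬ (v = u) := huv.symm
  have h2 : ¬ (v ≠ v) := fun h => h rfl
  tauto

lemma nbr_compress_mem {w : V} (hwu : w ≠ u) (hwv : w ≠ v) (hw : w ∈ moveSet G u v) :
    (G.compress u v).neighborFinset w = insert v ((G.neighborFinset w).erase u) := by
  obtain ⟨hadj, hnadj, -⟩ := (mem_moveSet G u v).1 hw
  ext y
  rw [mem_insert, mem_erase, SimpleGraph.mem_neighborFinset, SimpleGraph.mem_neighborFinset,
    compress_adj]
  have h3 : G.Adj w v → False := fun h => hnadj h.symm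
  tauto

lemma nbr_compress_notmem {w : V} (hwu : w ≠ u) (hwv : w ≠ v) (hw : w ∉ moveSet G u v) :
    (G.compress u v).neighborFinset w = G.neighborFinset w := by
  rw [mem_moveSet] at hw
  ext y
  rw [SimpleGraph.mem_neighborFinset, SimpleGraph.mem_neighborFinset, compress_adj]
  tauto

lemma degree_compress_u (huv : u ≠ v) :
    (G.compress u v).degree u + (moveSet G u v).card = G.degree u := by
  rw [SimpleGraph.degree, SimpleGraph.degree, nbr_compress_u G u v huv]
  exact Finset.card_sdiff_add_card_eq_card (moveSet_subset G u v)

lemma degree_compress_v (huv : u ≠ v) :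
    (G.compress u v).degree v = G.degree v + (moveSet G u v).card := by
  rw [SimpleGraph.degree, SimpleGraph.degree, nbr_compress_v G u v huv]
  apply Finset.card_union_of_disjoint
  rw [Finset.disjoint_left]
  intro x hx hx'
  rw [SimpleGraph.mem_neighborFinset] at hx
  exact ((mem_moveSet G u v).1 hx').2.1 hx

lemma degree_compress_other {w : V} (hwu : w ≠ u) (hwv : w ≠ v) :
    (G.compress u v).degree w = G.degree w := by
  by_cases hw : w ∈ moveSet G u v
  · rw [SimpleGraph.degree, SimpleGraph.degree, nbr_compress_mem G u v hwu hwv hw]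
    obtain ⟨hadj, hnadj, -⟩ := (mem_moveSet G u v).1 hw
    have hu : u ∈ G.neighborFinset w := by
      rw [SimpleGraph.mem_neighborFinset]; exact hadj.symm
    have hv : v ∉ (G.neighborFinset w).erase u := by
      intro h
      exact hnadj (((SimpleGraph.mem_neighborFinset G w v).1 (Finset.mem_of_mem_erase h)).symm)
    rw [Finset.card_insert_of_notMem hv, Finset.card_erase_of_mem hu]
    have : 1 ≤ (G.neighborFinset w).card := Finset.card_pos.2 ⟨u, hu⟩
    omega
  · rw [SimpleGraph.degree, SimpleGraph.degree, nbr_compress_notmem G u v hwu hwv hw]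

lemma degree_u_le : G.degree u ≤ G.degree v + (moveSet G u v).card := by
  have hsub : (G.neighborFinset u \ moveSet G u v).card ≤ G.degree v := by
    rw [SimpleGraph.degree]
    apply Finset.card_le_card_of_injOn (fun x => if x = v then u else x)
    · intro x hx
      rw [mem_coe, mem_sdiff, SimpleGraph.mem_neighborFinset, mem_moveSet] at hx
      obtain ⟨hadj, hns⟩ := hx
      by_cases hxv : x = v
      · simp only [hxv, if_pos rfl, mem_coe, SimpleGraph.mem_neighborFinset]
        exact (hxv ▸ hadj).symm
      · simp only [if_neg hxv, mem_coe, SimpleGraph.mem_neighborFinset]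
        by_contra h
        exact hns ⟨hadj, h, hxv⟩
    · intro x hx y hy hxy
      simp only at hxy
      rw [mem_coe, mem_sdiff, SimpleGraph.mem_neighborFinset] at hx hy
      by_cases hxv : x = v <;> by_cases hyv : y = v
      · rw [hxv, hyv]
      · rw [if_pos hxv, if_neg hyv] at hxy
        exact absurd hxy.symm (G.ne_of_adj hy.1).symm
      · rw [if_neg hxv, if_pos hyv] at hxy
        exact absurd hxy (G.ne_of_adj hx.1).symm
      · rwa [if_neg hxv, if_neg hyv] at hxy
  have := Finset.card_sdiff_add_card_eq_card (moveSet_subset G u v)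
  rw [SimpleGraph.degree]
  omega

end CompressAux

/-- Compression does not decrease variance irregularity: if `G'` is the compression of
`G` from `u` to `v`, then `σ(G') ≥ σ(G)`. -/
theorem compress_varianceIrregularity_ge {V : Type*} [Fintype V] [DecidableEq V]
    (G : SimpleGraph V) [DecidableRel G.Adj] (u v : V) (huv : u ≠ v)
    (hn : 1 ≤ Fintype.card V) :
    (G.compress u v).varianceIrregularity ≥ G.varianceIrregularity := by
  classical
  set G' := G.compress u v with hG'
  set k : ℕ := (moveSet G u v).card with hk
  -- real-valued degree facts
  have hA : (G'.degree u : ℝ) = (G.degree u : ℝ) - (k : ℝ) := by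
    have h := degree_compress_u G u v huv
    have h2 : ((G'.degree u : ℕ) : ℝ) + (k : ℝ) = (G.degree u : ℝ) := by exact_mod_cast h
    linarith
  have hB : (G'.degree v : ℝ) = (G.degree v : ℝ) + (k : ℝ) := by
    exact_mod_cast congrArg (Nat.cast (R := ℝ)) (degree_compress_v G u v huv)
  have hle : (G.degree u : ℝ) ≤ (G.degree v : ℝ) + (k : ℝ) := by
    exact_mod_cast degree_u_le G u v
  have hk0 : (0 : ℝ) ≤ (k : ℝ) := Nat.cast_nonneg k
  -- reduction of sums over univ to sums over {u, v}
  have key : ∀ f : ℕ → ℝ,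
      ∑ w, (f (G'.degree w) - f (G.degree w)) =
        (f (G'.degree u) - f (G.degree u)) + (f (G'.degree v) - f (G.degree v)) := by
    intro f
    have hsub : ∑ w ∈ ({u, v} : Finset V), (f (G'.degree w) - f (G.degree w)) =
        ∑ w, (f (G'.degree w) - f (G.degree w)) := by
      apply Finset.sum_subset (Finset.subset_univ _)
      intro x _ hx
      simp only [Finset.mem_insert, Finset.mem_singleton, not_or] at hx
      rw [degree_compress_other G u v hx.1 hx.2, sub_self]
    rw [← hsub, Finset.sum_pair huv]
  -- sums of degrees are equal
  have hL : ∑ w, (G'.degree w : ℝ) = ∑ w, (G.degree w : ℝ) := by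
    have h := key (fun d => (d : ℝ))
    have h2 : ∑ w, ((G'.degree w : ℝ) - (G.degree w : ℝ)) = 0 := by
      rw [h]; rw [hA, hB]; ring
    have h3 := Finset.sum_sub_distrib (s := (Finset.univ : Finset V))
      (f := fun w => (G'.degree w : ℝ)) (g := fun w => (G.degree w : ℝ))
    rw [h3] at h2
    linarith
  -- sums of squares increase
  have hSq : ∑ w, (G.degree w : ℝ) ^ 2 ≤ ∑ w, (G'.degree w : ℝ) ^ 2 := by
    have h := key (fun d => (d : ℝ) ^ 2)
    have h3 := Finset.sum_sub_distrib (s := (Finset.univ : Finset V))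
      (f := fun w => (G'.degree w : ℝ) ^ 2) (g := fun w => (G.degree w : ℝ) ^ 2)
    rw [h3] at h
    have hpos : (0 : ℝ) ≤ ((G'.degree u : ℝ) ^ 2 - (G.degree u : ℝ) ^ 2) +
        ((G'.degree v : ℝ) ^ 2 - (G.degree v : ℝ) ^ 2) := by
      rw [hA, hB]
      nlinarith [mul_nonneg hk0 (by linarith :
        (0 : ℝ) ≤ (k : ℝ) + (G.degree v : ℝ) - (G.degree u : ℝ))]
    linarith
  -- conclude
  have hnR : (0 : ℝ) < (Fintype.card V : ℝ) := by exact_mod_cast hn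
  unfold SimpleGraph.varianceIrregularity
  rw [hL]
  have : (1 / (Fintype.card V : ℝ)) * ∑ w, (G.degree w : ℝ) ^ 2 ≤
      (1 / (Fintype.card V : ℝ)) * ∑ w, (G'.degree w : ℝ) ^ 2 := by
    apply mul_le_mul_of_nonneg_left hSq
    positivity
  linarith
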